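/- Let $\ell \ge 5$ be a prime and let $n \ge 1$, $k$ be integers. Then $q_{(\ell-1)/2}(n,k) \equiv \left(\frac{(6k+1)^2-24n}{\ell}\right) \pmod{\ell}$, where $q_v(n,k) := 2^{-2v}\sum_{j=0}^{v}\binom{2v+1}{2j+1}\left((6k+1)^2-24n\right)^j (6k+1)^{2v-2j}$ (an integer for all $n,k$) and $\left(\frac{\cdot}{\ell}\right)$ is the Legendre symbol. -/

import Mathlib

/-- For a prime `ℓ ≥ 5`, with `v = (ℓ-1)/2`, the quantity
`q_v(n,k) = 2^{-2v} ∑_{j=0}^{v} C(2v+1,2j+1) ((6k+1)²-24n)^j (6k+1)^{2v-2j}` is congruent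
mod `ℓ` to the Legendre symbol `(((6k+1)²-24n)/ℓ)`.  We state the congruence in `ZMod ℓ`,
where `2` is invertible. -/
theorem qpoly_congr_legendre (ℓ : ℕ) [Fact (Nat.Prime ℓ)] (hℓ : 5 ≤ ℓ) (n k : ℤ) (hn : 1 ≤ n) :
    ((2 : ZMod ℓ)⁻¹) ^ (2 * ((ℓ - 1) / 2)) *
        ∑ j ∈ Finset.range ((ℓ - 1) / 2 + 1),
          ((2 * ((ℓ - 1) / 2) + 1).choose (2 * j + 1) : ZMod ℓ) *
            (((6 * k + 1) ^ 2 - 24 * n : ℤ) : ZMod ℓ) ^ j *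
            ((6 * k + 1 : ℤ) : ZMod ℓ) ^ (2 * ((ℓ - 1) / 2) - 2 * j) =
      ((legendreSym ℓ ((6 * k + 1) ^ 2 - 24 * n) : ℤ) : ZMod ℓ) := by
  have hp : ℓ.Prime := Fact.out
  have hodd : Odd ℓ := hp.odd_of_ne_two (by omega)
  set v := (ℓ - 1) / 2 with hv
  have h2v : 2 * v = ℓ - 1 := by
    obtain ⟨m, hm⟩ := hodd; omega
  have hℓv : 2 * v + 1 = ℓ := by omega
  -- the sum reduces to the last term
  have hsum : ∑ j ∈ Finset.range (v + 1),
      ((2 * v + 1).choose (2 * j + 1) : ZMod ℓ) *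
        (((6 * k + 1) ^ 2 - 24 * n : ℤ) : ZMod ℓ) ^ j *
        ((6 * k + 1 : ℤ) : ZMod ℓ) ^ (2 * v - 2 * j)
      = (((6 * k + 1) ^ 2 - 24 * n : ℤ) : ZMod ℓ) ^ v := by
    rw [Finset.sum_range_succ]
    have hzero : ∀ j ∈ Finset.range v,
        ((2 * v + 1).choose (2 * j + 1) : ZMod ℓ) *
          (((6 * k + 1) ^ 2 - 24 * n : ℤ) : ZMod ℓ) ^ j *
          ((6 * k + 1 : ℤ) : ZMod ℓ) ^ (2 * v - 2 * j) = 0 := by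
      intro j hj
      rw [Finset.mem_range] at hj
      have : ((2 * v + 1).choose (2 * j + 1) : ZMod ℓ) = 0 := by
        rw [hℓv]
        exact (ZMod.natCast_eq_zero_iff _ _).mpr
          (hp.dvd_choose_self (by omega) (by omega))
      rw [this, zero_mul, zero_mul]
    rw [Finset.sum_eq_zero hzero, zero_add, hℓv, Nat.choose_self,
      Nat.sub_self, pow_zero, Nat.cast_one, one_mul, mul_one]
  rw [hsum]
  have h2ne : (2 : ZMod ℓ) ≠ 0 := by
    have : ((2 : ℕ) : ZMod ℓ) ≠ 0 := by
      rw [Ne, ZMod.natCast_eq_zero_iff]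
      intro h
      have := Nat.le_of_dvd (by norm_num) h
      omega
    simpa using this
  have hinv : ((2 : ZMod ℓ)⁻¹) ^ (2 * v) = 1 := by
    rw [inv_pow, h2v, ZMod.pow_card_sub_one_eq_one h2ne, inv_one]
  rw [hinv, one_mul, legendreSym.eq_pow]
  congr 1
  omega
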